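/- Let f : ℝⁿ → ℝ be μ-strongly convex (μ > 0) and L-smooth (L > 0), let x* be the minimizer of f with f* = f(x*), and set κ = L/μ (so κ ≥ 1). Define the Nesterov iterates by x₋₁ = x₀, y_k = x_k + ((√κ − 1)/(√κ + 1))·(x_k − x_{k-1}), x_{k+1} = y_k − (1/L)∇f(y_k) for k ≥ 0, and set v_k = (√κ + 1)y_k − √κ·x_k. Define V_k = f(x_k) − f* + (μ/2)‖v_k − x*‖². Then V_{k+1} ≤ (1 − 1/√κ)·V_k for all k ≥ 0. -/

import Mathlib

open RealInnerProductSpace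

lemma descent_lemma {n : ℕ} (f : EuclideanSpace ℝ (Fin n) → ℝ) (L : ℝ) (hL : 0 < L)
    (hsmooth : ContDiff ℝ 1 f)
    (hlip : ∀ a b, ‖gradient f a - gradient f b‖ ≤ L * ‖a - b‖)
    (a b : EuclideanSpace ℝ (Fin n)) :
    f b ≤ f a + ⟪gradient f a, b - a⟫ + L / 2 * ‖b - a‖ ^ 2 := by
  have hdiff := hsmooth.differentiable one_ne_zero
  have hline : ∀ t : ℝ, HasDerivAt (fun t : ℝ => a + t • (b - a)) (b - a) t := by
    intro t
    simpa using ((hasDerivAt_id t).smul_const (b - a)).const_add a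
  have hφ : ∀ t : ℝ, HasDerivAt (fun t : ℝ => f (a + t • (b - a)))
      ⟪gradient f (a + t • (b - a)), b - a⟫ t := by
    intro t
    have h1 : HasGradientAt f (gradient f (a + t • (b - a))) (a + t • (b - a)) :=
      (hdiff _).hasGradientAt
    have h2 := hasGradientAt_iff_hasFDerivAt.mp h1
    have h3 := h2.comp_hasDerivAt t (hline t)
    exact h3
  have hglip : LipschitzWith (Real.toNNReal L) (gradient f) := by
    apply LipschitzWith.of_dist_le_mul
    intro p q
    simp only [dist_eq_norm]
    calc ‖gradient f p - gradient f q‖ ≤ L * ‖p - q‖ := hlip p q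
    _ = Real.toNNReal L * ‖p - q‖ := by rw [Real.coe_toNNReal _ hL.le]
  have hcont : Continuous fun t : ℝ => ⟪gradient f (a + t • (b - a)), b - a⟫ := by
    apply Continuous.inner
    · exact hglip.continuous.comp (by continuity)
    · exact continuous_const
  have key : f b - f a = ∫ t in (0:ℝ)..1, ⟪gradient f (a + t • (b - a)), b - a⟫ := by
    have := intervalIntegral.integral_eq_sub_of_hasDerivAt (fun t _ => hφ t)
      (hcont.intervalIntegrable 0 1)
    simpa using this.symm
  have bound : ∀ t ∈ Set.Icc (0:ℝ) 1,
      ⟪gradient f (a + t • (b - a)), b - a⟫ ≤ ⟪gradient f a, b - a⟫ + t * (L * ‖b - a‖ ^ 2) := by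
    intro t ht
    have h1 : ⟪gradient f (a + t • (b - a)) - gradient f a, b - a⟫
        ≤ ‖gradient f (a + t • (b - a)) - gradient f a‖ * ‖b - a‖ := real_inner_le_norm _ _
    have h2 : ‖gradient f (a + t • (b - a)) - gradient f a‖ ≤ L * (t * ‖b - a‖) := by
      have := hlip (a + t • (b - a)) a
      simpa [norm_smul, abs_of_nonneg ht.1] using this
    have h3 : ‖b - a‖ ≥ 0 := norm_nonneg _
    rw [inner_sub_left] at h1
    nlinarith [mul_le_mul_of_nonneg_right h2 h3]
  have hintle : (∫ t in (0:ℝ)..1, ⟪gradient f (a + t • (b - a)), b - a⟫)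
      ≤ ∫ t in (0:ℝ)..1, (⟪gradient f a, b - a⟫ + t * (L * ‖b - a‖ ^ 2)) := by
    apply intervalIntegral.integral_mono_on zero_le_one (hcont.intervalIntegrable 0 1)
    · exact ((continuous_const.add (continuous_id.mul continuous_const)).intervalIntegrable 0 1)
    · exact bound
  have hcomp : (∫ t in (0:ℝ)..1, (⟪gradient f a, b - a⟫ + t * (L * ‖b - a‖ ^ 2)))
      = ⟪gradient f a, b - a⟫ + L / 2 * ‖b - a‖ ^ 2 := by
    rw [intervalIntegral.integral_add (intervalIntegrable_const)
      ((intervalIntegral.intervalIntegrable_id).mul_const _)]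
    simp [integral_id]
    ring
  linarith [key ▸ (hintle.trans_eq hcomp)]

set_option maxHeartbeats 1000000 in
/-- The Lyapunov function `V_k = f(x_k) - f* + (μ/2)‖v_k - x*‖²` contracts at the
accelerated linear rate: `V_{k+1} ≤ (1 - 1/√κ) V_k`, where `κ = L/μ`. -/
theorem nesterov_strongly_convex_lyapunov {n : ℕ} (f : EuclideanSpace ℝ (Fin n) → ℝ)
    (L μ : ℝ) (hL : 0 < L) (hμ : 0 < μ)
    (hsmooth : ContDiff ℝ 1 f)
    (hlip : ∀ a b, ‖gradient f a - gradient f b‖ ≤ L * ‖a - b‖)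
    (hsconv : ∀ a b, f a + ⟪gradient f a, b - a⟫ + μ / 2 * ‖b - a‖ ^ 2 ≤ f b)
    (xs : EuclideanSpace ℝ (Fin n)) (hmin : ∀ z, f xs ≤ f z)
    (x y : ℕ → EuclideanSpace ℝ (Fin n))
    (hy : ∀ k : ℕ, y k = x k +
      ((Real.sqrt (L / μ) - 1) / (Real.sqrt (L / μ) + 1)) • (x k - x (k - 1)))
    (hx : ∀ k : ℕ, x (k + 1) = y k - (1 / L) • gradient f (y k))
    (v : ℕ → EuclideanSpace ℝ (Fin n))
    (hv : ∀ k : ℕ, v k = (Real.sqrt (L / μ) + 1) • y k - Real.sqrt (L / μ) • x k)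
    (V : ℕ → ℝ)
    (hV : ∀ k : ℕ, V k = f (x k) - f xs + μ / 2 * ‖v k - xs‖ ^ 2) :
    ∀ k : ℕ, V (k + 1) ≤ (1 - 1 / Real.sqrt (L / μ)) * V k := by
  intro k
  set s := Real.sqrt (L / μ) with hs_def
  rcases subsingleton_or_nontrivial (EuclideanSpace ℝ (Fin n)) with hsub | hnt
  · have hVk : ∀ m, V m = 0 := by
      intro m
      rw [hV m, Subsingleton.elim (x m) xs, Subsingleton.elim (v m) xs]
      simp
    rw [hVk, hVk]; simp
  -- nontrivial case: derive μ ≤ L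
  have hμL : μ ≤ L := by
    obtain ⟨a, b, hab⟩ := exists_pair_ne (EuclideanSpace ℝ (Fin n))
    have h1 := hsconv a b
    have h2 := hsconv b a
    have h3 : ⟪gradient f a - gradient f b, a - b⟫ ≤ ‖gradient f a - gradient f b‖ * ‖a - b‖ :=
      real_inner_le_norm _ _
    have h4 := hlip a b
    have h5 : (0:ℝ) < ‖a - b‖ := by
      rw [norm_pos_iff]; exact sub_ne_zero_of_ne hab
    have h6 : ‖b - a‖ = ‖a - b‖ := norm_sub_rev _ _
    have h7 : ⟪gradient f a, b - a⟫ = - ⟪gradient f a, a - b⟫ := by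
      rw [← inner_neg_right]; congr 1; abel
    have h8 : ⟪gradient f b, a - b⟫ = - ⟪gradient f b, b - a⟫ := by
      rw [← inner_neg_right]; congr 1; abel
    rw [inner_sub_left] at h3
    have h9 : ‖gradient f a - gradient f b‖ * ‖a - b‖ ≤ (L * ‖a - b‖) * ‖a - b‖ :=
      mul_le_mul_of_nonneg_right h4 (norm_nonneg _)
    rw [h6] at h1
    have hsq : ‖a - b‖ ^ 2 = ‖a - b‖ * ‖a - b‖ := sq ‖a - b‖
    have hpos : (0:ℝ) < ‖a - b‖ * ‖a - b‖ := mul_pos h5 h5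
    nlinarith [h1, h2, h3, h7, h9, hsq, hpos]
  have hs1 : 1 ≤ s := by
    rw [hs_def, show (1:ℝ) = Real.sqrt 1 by simp]
    exact Real.sqrt_le_sqrt ((one_le_div hμ).mpr hμL)
  have hs0 : 0 < s := lt_of_lt_of_le one_pos hs1
  have hs2 : μ * s ^ 2 = L := by
    rw [hs_def, Real.sq_sqrt (div_nonneg hL.le hμ.le)]
    field_simp
  have hsne : s ≠ 0 := hs0.ne'
  have hs1ne : s + 1 ≠ 0 := by positivity
  have hLne : L ≠ 0 := hL.ne'
  -- key vector identities
  have hk1 : k + 1 - 1 = k := rfl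
  have hvstep : v (k + 1) - xs =
      ((1 - 1/s) • (v k - xs) + (1/s) • (y k - xs)) - (s / L) • gradient f (y k) := by
    rw [hv (k+1), hy (k+1), hk1, hx k, hv k]
    match_scalars <;> field_simp <;> ring
  have hvy : v k - xs = (y k - xs) + s • (y k - x k) := by
    rw [hv k]; module
  -- norm expansion
  have hexp : ‖v (k + 1) - xs‖ ^ 2 =
      ‖(1 - 1/s) • (v k - xs) + (1/s) • (y k - xs)‖ ^ 2
      - 2 * (s/L) * ⟪gradient f (y k), (1 - 1/s) • (v k - xs) + (1/s) • (y k - xs)⟫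
      + (s/L)^2 * ‖gradient f (y k)‖ ^ 2 := by
    rw [hvstep, norm_sub_sq_real]
    have e1 : ⟪(1 - 1/s) • (v k - xs) + (1/s) • (y k - xs), (s/L) • gradient f (y k)⟫
        = (s/L) * ⟪gradient f (y k), (1 - 1/s) • (v k - xs) + (1/s) • (y k - xs)⟫ := by
      rw [real_inner_smul_right, real_inner_comm]
    have e2 : ‖(s/L) • gradient f (y k)‖^2 = (s/L)^2 * ‖gradient f (y k)‖^2 := by
      rw [norm_smul, mul_pow, Real.norm_eq_abs, sq_abs]
    rw [e1, e2]; ring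
  -- inner product decomposition
  have hPdec : ⟪gradient f (y k), (1 - 1/s) • (v k - xs) + (1/s) • (y k - xs)⟫
      = (1 - 1/s) * (⟪gradient f (y k), y k - xs⟫ + s * ⟪gradient f (y k), y k - x k⟫)
        + (1/s) * ⟪gradient f (y k), y k - xs⟫ := by
    rw [inner_add_right, real_inner_smul_right, real_inner_smul_right, hvy,
      inner_add_right, real_inner_smul_right]
  -- scalar identities
  have hsc1 : μ * (s/L) = 1/s := by
    field_simp
    linear_combination hs2
  have hsc2 : μ * (s/L)^2 = 1/L := by
    field_simp
    linear_combination hs2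
  -- the quadratic-term equality
  have hquad : μ/2 * ‖v (k+1) - xs‖^2 =
      μ/2 * ‖(1 - 1/s) • (v k - xs) + (1/s) • (y k - xs)‖^2
      - (1/s) * ⟪gradient f (y k), y k - xs⟫
      - (1 - 1/s) * ⟪gradient f (y k), y k - x k⟫
      + 1/(2*L) * ‖gradient f (y k)‖^2 := by
    rw [hexp, hPdec]
    set P1 := ⟪gradient f (y k), y k - xs⟫
    set P2 := ⟪gradient f (y k), y k - x k⟫
    set G := ‖gradient f (y k)‖^2
    set W := ‖(1 - 1/s) • (v k - xs) + (1/s) • (y k - xs)‖^2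
    have e1 : μ/2 * (2 * (s/L) * ((1 - 1/s) * (P1 + s * P2) + (1/s) * P1))
        = (1/s) * ((1 - 1/s) * (P1 + s * P2) + (1/s) * P1) := by
      rw [show μ/2 * (2 * (s/L) * ((1 - 1/s) * (P1 + s * P2) + (1/s) * P1))
        = (μ * (s/L)) * ((1 - 1/s) * (P1 + s * P2) + (1/s) * P1) by ring, hsc1]
    have e2 : μ/2 * ((s/L)^2 * G) = 1/(2*L) * G := by
      rw [show μ/2 * ((s/L)^2 * G) = (μ * (s/L)^2) * G / 2 by ring, hsc2]
      ring
    have e3 : (1/s) * ((1 - 1/s) * (P1 + s * P2) + (1/s) * P1)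
        = (1/s) * P1 + (1 - 1/s) * P2 := by
      field_simp
      ring
    calc μ/2 * (W - 2 * (s/L) * ((1 - 1/s) * (P1 + s * P2) + (1/s) * P1) + (s/L)^2 * G)
        = μ/2 * W - μ/2 * (2 * (s/L) * ((1 - 1/s) * (P1 + s * P2) + (1/s) * P1))
          + μ/2 * ((s/L)^2 * G) := by ring
      _ = _ := by rw [e1, e2, e3]; ring
  -- descent lemma bound
  have hdesc : f (x (k+1)) ≤ f (y k) - 1/(2*L) * ‖gradient f (y k)‖^2 := by
    have hd := descent_lemma f L hL hsmooth hlip (y k) (x (k+1))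
    rw [hx k] at hd ⊢
    have h1 : y k - (1/L) • gradient f (y k) - y k = -((1/L) • gradient f (y k)) := by abel
    rw [h1, inner_neg_right, real_inner_smul_right, real_inner_self_eq_norm_sq] at hd
    have h2 : ‖-((1/L) • gradient f (y k))‖^2 = (1/L)^2 * ‖gradient f (y k)‖^2 := by
      rw [norm_neg, norm_smul, mul_pow, Real.norm_eq_abs, sq_abs]
    rw [h2] at hd
    have h3 : f (y k) + -(1/L * ‖gradient f (y k)‖^2) + L/2 * ((1/L)^2 * ‖gradient f (y k)‖^2)
        = f (y k) - 1/(2*L) * ‖gradient f (y k)‖^2 := by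
      field_simp; ring
    linarith [hd.trans_eq h3]
  -- strong convexity bounds
  have hsc_y_xs : f (y k) - f xs + μ/2 * ‖y k - xs‖^2 ≤ ⟪gradient f (y k), y k - xs⟫ := by
    have h := hsconv (y k) xs
    have h2 : ‖xs - y k‖ = ‖y k - xs‖ := norm_sub_rev _ _
    have h3 : ⟪gradient f (y k), xs - y k⟫ = - ⟪gradient f (y k), y k - xs⟫ := by
      rw [← inner_neg_right]; congr 1; abel
    rw [h2, h3] at h
    linarith
  have hsc_y_x : f (y k) - f (x k) ≤ ⟪gradient f (y k), y k - x k⟫ := by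
    have h := hsconv (y k) (x k)
    have h3 : ⟪gradient f (y k), x k - y k⟫ = - ⟪gradient f (y k), y k - x k⟫ := by
      rw [← inner_neg_right]; congr 1; abel
    rw [h3] at h
    have h4 : (0:ℝ) ≤ μ/2 * ‖x k - y k‖^2 := by positivity
    linarith
  -- convexity of squared norm
  have ht0 : (0:ℝ) ≤ 1/s := div_nonneg zero_le_one hs0.le
  have hρ0 : (0:ℝ) ≤ 1 - 1/s := by
    have : 1/s ≤ 1 := by rw [div_le_one hs0]; exact hs1
    linarith
  have hWle : ‖(1 - 1/s) • (v k - xs) + (1/s) • (y k - xs)‖^2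
      ≤ (1 - 1/s) * ‖v k - xs‖^2 + (1/s) * ‖y k - xs‖^2 := by
    have hexp2 : ‖(1 - 1/s) • (v k - xs) + (1/s) • (y k - xs)‖^2
        = (1-1/s)^2 * ‖v k - xs‖^2 + 2 * ((1-1/s) * (1/s)) * ⟪v k - xs, y k - xs⟫
          + (1/s)^2 * ‖y k - xs‖^2 := by
      rw [norm_add_sq_real, real_inner_smul_left, real_inner_smul_right,
        norm_smul, norm_smul, mul_pow, mul_pow, Real.norm_eq_abs, Real.norm_eq_abs,
        sq_abs, sq_abs]
      ring
    rw [hexp2]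
    have hcs : ⟪v k - xs, y k - xs⟫ ≤ ‖v k - xs‖ * ‖y k - xs‖ := real_inner_le_norm _ _
    have hts : (1 - 1/s) + 1/s = 1 := by ring
    nlinarith [sq_nonneg (‖v k - xs‖ - ‖y k - xs‖), norm_nonneg (v k - xs),
      norm_nonneg (y k - xs), mul_nonneg hρ0 ht0,
      mul_le_mul_of_nonneg_left hcs (mul_nonneg hρ0 ht0)]
  -- assemble
  rw [hV (k+1), hV k]
  have hA2 : μ/2 * ‖(1 - 1/s) • (v k - xs) + (1/s) • (y k - xs)‖^2
      ≤ μ/2 * ((1 - 1/s) * ‖v k - xs‖^2 + (1/s) * ‖y k - xs‖^2) :=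
    mul_le_mul_of_nonneg_left hWle (by positivity)
  have hA3 : (1/s) * (f (y k) - f xs + μ/2 * ‖y k - xs‖^2)
      ≤ (1/s) * ⟪gradient f (y k), y k - xs⟫ :=
    mul_le_mul_of_nonneg_left hsc_y_xs ht0
  have hA4 : (1 - 1/s) * (f (y k) - f (x k)) ≤ (1 - 1/s) * ⟪gradient f (y k), y k - x k⟫ :=
    mul_le_mul_of_nonneg_left hsc_y_x hρ0
  linarith [hquad, hdesc, hA2, hA3, hA4]
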